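/- arXiv:2001.00751 — 5 statements merged into one kernel-verified Lean document; each statement's English description precedes it below -/
import Mathlib

section
/- Let X be a compact Hausdorff space, Y a topological space, and h : Y → X a continuous map. Consider the subgroup G of C(Y, ℤ) generated by all functions of the form y ↦ rank(p(h(y))), where n ranges over the natural numbers and p ranges over continuous functions X → M_n(ℂ) such that p(x) is a projection (p(x)² = p(x) = p(x)*) for every x ∈ X. Then G equals the set {f ∘ h : f ∈ C(X, ℤ)}. -/
open Matrix

/-- trace of a hermitian idempotent equals its rank -/
lemma proj_trace_eq_rank {n : ℕ} {A : Matrix (Fin n) (Fin n) ℂ}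
    (h1 : A * A = A) (h2 : Aᴴ = A) : A.trace = (A.rank : ℂ) := by
  have hA : A.IsHermitian := h2
  classical
  have hdiag := hA.conjStarAlgAut_star_eigenvectorUnitary
  rw [Unitary.conjStarAlgAut_star_apply] at hdiag
  set U : Matrix (Fin n) (Fin n) ℂ := (hA.eigenvectorUnitary : Matrix (Fin n) (Fin n) ℂ) with hU
  have hUU : U * star U = 1 := (Matrix.mem_unitaryGroup_iff).mp hA.eigenvectorUnitary.2
  have hev : ∀ i, hA.eigenvalues i = 0 ∨ hA.eigenvalues i = 1 := by
    intro i
    have hD : (diagonal (RCLike.ofReal ∘ hA.eigenvalues) : Matrix (Fin n) (Fin n) ℂ) *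
        diagonal (RCLike.ofReal ∘ hA.eigenvalues) =
        diagonal (RCLike.ofReal ∘ hA.eigenvalues) := by
      have e1 : (star U * A * U) * (star U * A * U)
          = star U * A * ((U * star U) * (A * U)) := by noncomm_ring
      rw [← hdiag, e1, hUU, one_mul, ← mul_assoc, mul_assoc (star U), h1]
    rw [diagonal_mul_diagonal] at hD
    have := congrFun (congrFun hD i) i
    simp only [diagonal_apply_eq, Function.comp_apply, Pi.mul_apply] at this
    have h' : (hA.eigenvalues i : ℂ) * (hA.eigenvalues i : ℂ) = (hA.eigenvalues i : ℂ) := this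
    have h'' : hA.eigenvalues i * hA.eigenvalues i = hA.eigenvalues i := by
      exact_mod_cast h'
    rcases mul_eq_zero.mp (by linarith [h''] : hA.eigenvalues i * (hA.eigenvalues i - 1) = 0) with
      h | h
    · exact Or.inl h
    · exact Or.inr (by linarith [sub_eq_zero.mp h])
  have htr : A.trace = ∑ i, ((hA.eigenvalues i : ℝ) : ℂ) := by
    conv_lhs => rw [hA.spectral_theorem, Unitary.conjStarAlgAut_apply]
    rw [Matrix.trace_mul_cycle, ← hU,
      (Matrix.mem_unitaryGroup_iff').mp hA.eigenvectorUnitary.2, one_mul, trace_diagonal]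
    rfl
  rw [htr, hA.rank_eq_card_non_zero_eigs]
  rw [Fintype.card_subtype]
  rw [← Finset.sum_boole]
  refine Finset.sum_congr rfl fun i _ => ?_
  rcases hev i with h | h <;> simp [h]

lemma rank_continuous {X : Type*} [TopologicalSpace X] {n : ℕ}
    (p : C(X, Matrix (Fin n) (Fin n) ℂ))
    (hp : ∀ x : X, p x * p x = p x ∧ (p x)ᴴ = p x) :
    Continuous (fun x => ((p x).rank : ℤ)) := by
  have htr : ∀ x, (p x).trace = (((p x).rank : ℤ) : ℂ) := by
    intro x
    rw [proj_trace_eq_rank (hp x).1 (hp x).2]; push_cast; rfl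
  have hct : Continuous (fun x => (p x).trace) := by
    unfold Matrix.trace
    exact continuous_finset_sum _ fun i _ =>
      (continuous_apply i).comp ((continuous_apply i).comp p.continuous)
  rw [← IsLocallyConstant.iff_continuous]
  intro s
  have : (fun x => ((p x).rank : ℤ)) ⁻¹' s =
      ⋃ k ∈ s, (fun x => (p x).trace) ⁻¹' (Metric.ball ((k : ℤ) : ℂ) 1) := by
    ext x
    simp only [Set.mem_preimage, Set.mem_iUnion, Metric.mem_ball]
    constructor
    · intro hx
      exact ⟨_, hx, by rw [htr x]; simp⟩
    · rintro ⟨k, hk, hdist⟩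
      rw [htr x] at hdist
      have : (((p x).rank : ℤ) : ℂ) = ((k : ℤ) : ℂ) := by
        by_contra hne
        have hne' : ((p x).rank : ℤ) ≠ k := fun e => hne (by rw [e])
        have : (1 : ℝ) ≤ dist ((((p x).rank : ℤ)) : ℂ) ((k : ℂ)) := by
          rw [Complex.dist_eq]
          have : ((((p x).rank : ℤ) : ℂ)) - (k : ℂ) = ((((p x).rank : ℤ) - k : ℤ) : ℂ) := by
            push_cast; ring
          rw [this, Complex.norm_intCast]
          exact_mod_cast Int.one_le_abs (sub_ne_zero.mpr hne')
        linarith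
      have : ((p x).rank : ℤ) = k := by exact_mod_cast this
      rwa [this]
  rw [this]
  exact isOpen_biUnion fun k _ => (Metric.isOpen_ball).preimage hct

/-- For `X` compact Hausdorff, `Y` a topological space and `h : Y → X`
continuous, the subgroup of `C(Y, ℤ)` generated by the functions
`y ↦ rank (p (h y))`, where `p` ranges over continuous projection-valued functions
`X → M_n(ℂ)`, equals `{f ∘ h : f ∈ C(X, ℤ)}`. -/
theorem stmt2 {X Y : Type*} [TopologicalSpace X] [CompactSpace X] [T2Space X]
    [TopologicalSpace Y] (h : C(Y, X)) :
    (AddSubgroup.closure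
        {g : C(Y, ℤ) | ∃ (n : ℕ) (p : C(X, Matrix (Fin n) (Fin n) ℂ)),
          (∀ x : X, p x * p x = p x ∧ (p x)ᴴ = p x) ∧
          ∀ y : Y, g y = ((p (h y)).rank : ℤ)} : Set C(Y, ℤ))
      = {g : C(Y, ℤ) | ∃ f : C(X, ℤ), g = f.comp h} := by
  classical
  let Φ : C(X, ℤ) →+ C(Y, ℤ) :=
    AddMonoidHom.mk' (fun f => f.comp h) (fun f g => by ext y; simp)
  have key : AddSubgroup.closure
      {g : C(Y, ℤ) | ∃ (n : ℕ) (p : C(X, Matrix (Fin n) (Fin n) ℂ)),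
        (∀ x : X, p x * p x = p x ∧ (p x)ᴴ = p x) ∧
        ∀ y : Y, g y = ((p (h y)).rank : ℤ)} = Φ.range := by
    apply le_antisymm
    · rw [AddSubgroup.closure_le]
      rintro g ⟨n, p, hp, hg⟩
      refine ⟨⟨fun x => ((p x).rank : ℤ), rank_continuous p hp⟩, ?_⟩
      ext y
      simp only [Φ, AddMonoidHom.mk'_apply, ContinuousMap.comp_apply, ContinuousMap.coe_mk]
      exact (hg y).symm
    · rintro g ⟨f, rfl⟩
      set s : Finset ℤ :=
        ((isCompact_range f.continuous).finite_of_discrete).toFinset with hs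
      let e : ℤ → C(X, ℤ) := fun k =>
        ContinuousMap.comp ⟨fun t => if t = k then 1 else 0,
          continuous_of_discreteTopology⟩ f
      have hfsum : f = ∑ k ∈ s, k • e k := by
        ext x
        simp only [ContinuousMap.coe_sum, Finset.sum_apply, ContinuousMap.coe_smul,
          Pi.smul_apply, e, ContinuousMap.comp_apply, ContinuousMap.coe_mk,
          smul_eq_mul, mul_ite, mul_one, mul_zero]
        rw [Finset.sum_ite_eq]
        simp [hs, Set.mem_range_self]
      rw [hfsum, map_sum]
      refine AddSubgroup.sum_mem _ fun k _ => ?_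
      rw [map_zsmul]
      refine AddSubgroup.zsmul_mem _ (AddSubgroup.subset_closure ?_) k
      refine ⟨1, ⟨fun x => if f x = k then (1 : Matrix (Fin 1) (Fin 1) ℂ) else 0,
        (continuous_of_discreteTopology
          (f := fun t : ℤ => if t = k then (1 : Matrix (Fin 1) (Fin 1) ℂ) else 0)).comp
          f.continuous⟩, ?_, ?_⟩
      · intro x
        by_cases hx : f x = k <;> simp [hx]
      · intro y
        simp only [Φ, AddMonoidHom.mk'_apply, ContinuousMap.comp_apply,
          ContinuousMap.coe_mk, e]
        by_cases hx : f (h y) = k <;>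
          simp [hx, Matrix.rank_one, Matrix.rank_zero]
  rw [key]
  ext g
  simp only [AddMonoidHom.coe_range, Set.mem_range, Set.mem_setOf_eq]
  exact exists_congr fun f => ⟨fun hf => hf ▸ rfl, fun hf => hf.symm⟩
end

section
/- Let k, ℓ ∈ ℕ with k ≤ ℓ and let E be an ℓ × k matrix with integer entries. Let d be the greatest common divisor of the set of determinants of all full square submatrices of E, i.e., of all k × k matrices obtained from E by selecting k of its ℓ rows (via a strictly increasing injection from {1,…,k} into {1,…,ℓ}) and keeping all columns. Then there exists a k × ℓ integer matrix K such that K·E = d·I_k, where I_k is the k × k identity matrix. -/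
open Matrix

/-- Bezout for finite gcd over ℤ. -/
lemma bezout_finset {α : Type*} [DecidableEq α] (s : Finset α) (f : α → ℤ) :
    ∃ c : α → ℤ, s.gcd f = ∑ i ∈ s, c i * f i := by
  classical
  induction s using Finset.induction_on with
  | empty => exact ⟨0, by simp⟩
  | insert a s ha ih =>
    obtain ⟨c, hc⟩ := ih
    rw [Finset.gcd_insert]
    have hbez : (Int.gcd (f a) (s.gcd f) : ℤ)
        = f a * Int.gcdA (f a) (s.gcd f) + s.gcd f * Int.gcdB (f a) (s.gcd f) :=
      Int.gcd_eq_gcd_ab _ _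
    refine ⟨fun i => if i = a then Int.gcdA (f a) (s.gcd f)
      else Int.gcdB (f a) (s.gcd f) * c i, ?_⟩
    rw [Finset.sum_insert ha]
    have : ∑ i ∈ s, (if i = a then Int.gcdA (f a) (s.gcd f)
        else Int.gcdB (f a) (s.gcd f) * c i) * f i
        = Int.gcdB (f a) (s.gcd f) * ∑ i ∈ s, c i * f i := by
      rw [Finset.mul_sum]
      refine Finset.sum_congr rfl fun i hi => ?_
      rw [if_neg (by rintro rfl; exact ha hi)]; ring
    rw [this, ← hc]
    rw [← Int.coe_gcd, hbez]
    beta_reduce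
    rw [if_pos rfl]
    ring

/-- For an `ℓ × k` integer matrix `E` with `k ≤ ℓ`, if `d` is the gcd of
the determinants of all full square submatrices of `E` (selected by strictly increasing
injections of rows), then there is a `k × ℓ` integer matrix `K` with `K * E = d • I`. -/
theorem stmt3 {k ℓ : ℕ} (hkl : k ≤ ℓ) (E : Matrix (Fin ℓ) (Fin k) ℤ) (d : ℤ)
    (hd : d = Finset.gcd
        (Finset.univ.filter (fun ρ : Fin k ↪ Fin ℓ => StrictMono ρ))
        (fun ρ => (E.submatrix ρ id).det)) :
    ∃ K : Matrix (Fin k) (Fin ℓ) ℤ, K * E = d • (1 : Matrix (Fin k) (Fin k) ℤ) := by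
  classical
  set F := Finset.univ.filter (fun ρ : Fin k ↪ Fin ℓ => StrictMono ρ) with hF
  obtain ⟨c, hc⟩ := bezout_finset F (fun ρ => (E.submatrix ρ id).det)
  -- projection matrix picking rows ρ
  set P : (Fin k ↪ Fin ℓ) → Matrix (Fin k) (Fin ℓ) ℤ :=
    fun ρ => Matrix.of (fun j i => if ρ j = i then 1 else 0) with hP
  have hPE : ∀ ρ : Fin k ↪ Fin ℓ, P ρ * E = E.submatrix ρ id := by
    intro ρ
    ext j c'
    simp [hP, Matrix.mul_apply]
  refine ⟨∑ ρ ∈ F, c ρ • ((E.submatrix ρ id).adjugate * P ρ), ?_⟩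
  rw [Matrix.sum_mul]
  have : ∀ ρ ∈ F, (c ρ • ((E.submatrix ρ id).adjugate * P ρ)) * E
      = (c ρ * (E.submatrix ρ id).det) • (1 : Matrix (Fin k) (Fin k) ℤ) := by
    intro ρ _
    rw [Matrix.smul_mul, Matrix.mul_assoc, hPE, Matrix.adjugate_mul, smul_smul]
  rw [Finset.sum_congr rfl this, ← Finset.sum_smul, ← hc, hd]
end

section
/- Let k, ℓ ∈ ℕ with k ≤ ℓ and let E be an ℓ × k integer matrix. Let h : ℤ^k → ℤ^ℓ be the group homomorphism h(X) = E·X and let H = range(h). Then the following are equivalent: (1) there exists a k × ℓ integer matrix K with K·E = I_k; (2) the quotient group ℤ^ℓ/H is torsion free and h is injective; (3) the greatest common divisor of the determinants of all full square submatrices of E equals 1. -/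
open Matrix

/-- Bezout coefficients for a `Finset.gcd` over `ℤ`. -/
lemma exists_gcd_eq_sum_aux {ι : Type*} [DecidableEq ι] (s : Finset ι) (f : ι → ℤ) :
    ∃ c : ι → ℤ, ∑ i ∈ s, c i * f i = s.gcd f := by
  classical
  induction s using Finset.induction_on with
  | empty => exact ⟨0, by simp⟩
  | @insert a s ha ih =>
    obtain ⟨c, hc⟩ := ih
    refine ⟨fun i => if i = a then Int.gcdA (f a) (s.gcd f)
      else Int.gcdB (f a) (s.gcd f) * c i, ?_⟩
    rw [Finset.gcd_insert, Finset.sum_insert ha, ← Int.coe_gcd, Int.gcd_eq_gcd_ab]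
    dsimp only
    rw [if_pos rfl]
    have h1 : ∑ i ∈ s, (if i = a then Int.gcdA (f a) (s.gcd f)
        else Int.gcdB (f a) (s.gcd f) * c i) * f i
        = Int.gcdB (f a) (s.gcd f) * ∑ i ∈ s, c i * f i := by
      rw [Finset.mul_sum]
      refine Finset.sum_congr rfl fun i hi => ?_
      rw [if_neg (by rintro rfl; exact ha hi)]
      ring
    rw [h1, hc]
    ring

/-- Over a field, an `ℓ × k` matrix with injective `mulVec` has a nonzero full `k × k` minor
at strictly increasing rows. -/
lemma exists_nonzero_minor_aux {F : Type*} [Field F] {k ℓ : ℕ} (M : Matrix (Fin ℓ) (Fin k) F)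
    (hinj : Function.Injective M.mulVec) :
    ∃ ρ : Fin k ↪ Fin ℓ, StrictMono ρ ∧ (M.submatrix ρ id).det ≠ 0 := by
  classical
  have hker : LinearMap.ker M.mulVecLin = ⊥ := by
    rw [LinearMap.ker_eq_bot, Matrix.coe_mulVecLin]
    exact hinj
  have hrank : M.rank = k := by
    have h1 := LinearMap.finrank_range_add_finrank_ker M.mulVecLin
    rw [hker, finrank_bot, add_zero, Module.finrank_fin_fun] at h1
    exact h1
  have hspan : Submodule.span F (Set.range M) = ⊤ := by
    apply Submodule.eq_top_of_finrank_eq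
    rw [show Set.range M = Set.range M.row from rfl, ← Matrix.rank_eq_finrank_span_row M, hrank, Module.finrank_fin_fun]
  obtain ⟨b, hbsub, hbspan, hbli⟩ := exists_linearIndependent F (Set.range M)
  rw [hspan] at hbspan
  haveI : Fintype b := hbli.setFinite.fintype
  let bas : Module.Basis b F (Fin k → F) :=
    Module.Basis.mk hbli (by rw [Subtype.range_coe, hbspan])
  have hcardb : Fintype.card b = k := by
    have h := Module.finrank_eq_card_basis bas
    rw [Module.finrank_fin_fun] at h
    exact h.symm
  have hchoice : ∀ x : b, ∃ i : Fin ℓ, M i = (x : Fin k → F) := fun x => hbsub x.2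
  choose g hg using hchoice
  have hginj : Function.Injective g := fun x y hxy =>
    Subtype.ext (by rw [← hg x, ← hg y, hxy])
  set t : Finset (Fin ℓ) := Finset.univ.map ⟨g, hginj⟩ with ht
  have htcard : t.card = k := by simp [ht, hcardb]
  set ρ := t.orderEmbOfFin htcard with hρ
  refine ⟨⟨fun i => ρ i, ρ.injective⟩, ρ.strictMono, ?_⟩
  have hmem : ∀ i : Fin k, ∃ x : b, g x = ρ i := by
    intro i
    have h2 : ρ i ∈ t := t.orderEmbOfFin_mem htcard i
    simpa [ht, Finset.mem_map] using h2
  choose e he using hmem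
  have heinj : Function.Injective e := by
    intro i j hij
    exact ρ.injective (by rw [← he i, ← he j, hij])
  have hrows : LinearIndependent F (fun i : Fin k => M (ρ i)) := by
    have h3 : (fun i : Fin k => M (ρ i)) = (fun x : b => (x : Fin k → F)) ∘ e := by
      funext i
      rw [Function.comp_apply, ← hg (e i), he i]
    rw [h3]
    exact hbli.comp e heinj
  have hA : LinearIndependent F
      (fun i => (M.submatrix (fun i => ρ i) id) i) := hrows
  have hU : IsUnit (M.submatrix (fun i => ρ i) id) :=
    Matrix.linearIndependent_rows_iff_isUnit.mp hA
  have hdet : IsUnit (M.submatrix (fun i => ρ i) id).det :=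
    (Matrix.isUnit_iff_isUnit_det _).mp hU
  exact hdet.ne_zero

/-- For an `ℓ × k` integer matrix `E` with `k ≤ ℓ`, with
`h : ℤ^k → ℤ^ℓ`, `h X = E.mulVec X` and `H = range h`, the following are equivalent:
(1) `E` has a left inverse integer matrix `K` with `K * E = I`;
(2) `ℤ^ℓ / H` is torsion free and `h` is injective;
(3) the gcd of the determinants of all full square submatrices of `E` is `1`. -/
theorem stmt5 {k ℓ : ℕ} (hkl : k ≤ ℓ) (E : Matrix (Fin ℓ) (Fin k) ℤ) :
    List.TFAE
      [ ∃ K : Matrix (Fin k) (Fin ℓ) ℤ, K * E = (1 : Matrix (Fin k) (Fin k) ℤ),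
        (∀ (Y : Fin ℓ → ℤ) (n : ℕ), 0 < n →
            (n : ℤ) • Y ∈ Set.range E.mulVec → Y ∈ Set.range E.mulVec) ∧
          Function.Injective (E.mulVec : (Fin k → ℤ) → (Fin ℓ → ℤ)),
        Finset.gcd (Finset.univ.filter (fun ρ : Fin k ↪ Fin ℓ => StrictMono ρ))
          (fun ρ => (E.submatrix ρ id).det) = 1 ] := by
  classical
  tfae_have 1 → 2 := by
    rintro ⟨K, hK⟩
    have h1 : ∀ v, K.mulVec (E.mulVec v) = v := by
      intro v
      rw [Matrix.mulVec_mulVec, hK, Matrix.one_mulVec]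
    constructor
    · rintro Y n hn ⟨X, hX⟩
      refine ⟨K.mulVec Y, ?_⟩
      have h2 : X = (n : ℤ) • K.mulVec Y := by
        rw [← h1 X, hX, Matrix.mulVec_smul]
      have h3 : (n : ℤ) • E.mulVec (K.mulVec Y) = (n : ℤ) • Y := by
        rw [← Matrix.mulVec_smul, ← h2, hX]
      have hn' : (n : ℤ) ≠ 0 := by exact_mod_cast hn.ne'
      exact smul_right_injective _ hn' h3
    · intro X Y hXY
      have h4 := congrArg K.mulVec hXY
      rwa [h1, h1] at h4
  tfae_have 2 → 1 := by
    rintro ⟨tf, inj⟩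
    set φ := E.mulVecLin with hφ
    have hφinj : Function.Injective φ := inj
    have hmemiff : ∀ Z, Z ∈ LinearMap.range φ ↔ Z ∈ Set.range E.mulVec := by
      intro Z
      constructor
      · rintro ⟨X, hX⟩; exact ⟨X, hX⟩
      · rintro ⟨X, hX⟩; exact ⟨X, hX⟩
    haveI : NoZeroSMulDivisors ℤ ((Fin ℓ → ℤ) ⧸ LinearMap.range φ) := by
      refine ⟨fun {c x} hcx => ?_⟩
      by_cases hc : c = 0
      · exact Or.inl hc
      refine Or.inr ?_
      obtain ⟨Y, rfl⟩ := Submodule.Quotient.mk_surjective (LinearMap.range φ) x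
      rw [← Submodule.Quotient.mk_smul, Submodule.Quotient.mk_eq_zero] at hcx
      rw [Submodule.Quotient.mk_eq_zero]
      have key : ∀ c : ℤ, 0 < c → c • Y ∈ LinearMap.range φ → Y ∈ LinearMap.range φ := by
        intro c hcpos hY
        have hc' : ((c.toNat : ℕ) : ℤ) = c := Int.toNat_of_nonneg hcpos.le
        refine (hmemiff Y).mpr (tf Y c.toNat (by omega) ?_)
        rw [hc']
        exact (hmemiff _).mp hY
      rcases lt_or_gt_of_ne hc with hneg | hpos
      · refine key (-c) (by omega) ?_
        have : (-c) • Y = -(c • Y) := by rw [neg_smul]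
        rw [this]
        exact Submodule.neg_mem _ hcx
      · exact key c hpos hcx
    haveI : Module.Finite ℤ ((Fin ℓ → ℤ) ⧸ LinearMap.range φ) :=
      Module.Finite.of_surjective (LinearMap.range φ).mkQ (Submodule.mkQ_surjective _)
    haveI : Module.Free ℤ ((Fin ℓ → ℤ) ⧸ LinearMap.range φ) :=
      Module.free_of_finite_type_torsion_free'
    obtain ⟨s, hs⟩ := Module.projective_lifting_property (LinearMap.range φ).mkQ
      (LinearMap.id) (Submodule.mkQ_surjective _)
    set π : (Fin ℓ → ℤ) →ₗ[ℤ] (Fin ℓ → ℤ) :=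
      LinearMap.id - s ∘ₗ (LinearMap.range φ).mkQ with hπdef
    have hπmem : ∀ x, π x ∈ LinearMap.range φ := by
      intro x
      have h0 : (LinearMap.range φ).mkQ (π x) = 0 := by
        have hsx := LinearMap.congr_fun hs ((LinearMap.range φ).mkQ x)
        simp only [LinearMap.comp_apply, LinearMap.id_apply] at hsx
        have hpx : π x = x - s ((LinearMap.range φ).mkQ x) := rfl
        rw [hpx, map_sub, hsx, sub_self]
      rwa [← Submodule.ker_mkQ (LinearMap.range φ), LinearMap.mem_ker]
    have hπφ : ∀ X, π (φ X) = φ X := by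
      intro X
      have h0 : (LinearMap.range φ).mkQ (φ X) = 0 := by
        rw [← LinearMap.mem_ker, Submodule.ker_mkQ]
        exact ⟨X, rfl⟩
      simp [hπdef, LinearMap.sub_apply, LinearMap.comp_apply, h0]
    set e := LinearEquiv.ofInjective φ hφinj with he
    set g : (Fin ℓ → ℤ) →ₗ[ℤ] (Fin k → ℤ) :=
      (e.symm : (LinearMap.range φ) →ₗ[ℤ] (Fin k → ℤ)) ∘ₗ
        LinearMap.codRestrict (LinearMap.range φ) π hπmem with hgdef
    have hg : ∀ X, g (φ X) = X := by
      intro X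
      have h1 : LinearMap.codRestrict (LinearMap.range φ) π hπmem (φ X) = e X := by
        apply Subtype.ext
        rw [LinearMap.codRestrict_apply, hπφ X, he, LinearEquiv.ofInjective_apply]
      show e.symm (LinearMap.codRestrict (LinearMap.range φ) π hπmem (φ X)) = X
      rw [h1, LinearEquiv.symm_apply_apply]
    refine ⟨LinearMap.toMatrix' g, ?_⟩
    have hE : LinearMap.toMatrix' φ = E := by
      rw [hφ, ← Matrix.toLin'_apply' E, LinearMap.toMatrix'_toLin']
    calc LinearMap.toMatrix' g * E
        = LinearMap.toMatrix' g * LinearMap.toMatrix' φ := by rw [hE]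
      _ = LinearMap.toMatrix' (g ∘ₗ φ) := (LinearMap.toMatrix'_comp g φ).symm
      _ = 1 := by
          rw [show g ∘ₗ φ = LinearMap.id from LinearMap.ext hg, LinearMap.toMatrix'_id]
  tfae_have 2 → 3 := by
    rintro ⟨tf, inj⟩
    set f : (Fin k ↪ Fin ℓ) → ℤ := fun ρ => (E.submatrix ρ id).det with hf
    set S : Finset (Fin k ↪ Fin ℓ) :=
      Finset.univ.filter (fun ρ : Fin k ↪ Fin ℓ => StrictMono ρ) with hS
    have key : ∀ p : ℕ, p.Prime → ¬ ((p : ℤ) ∣ S.gcd f) := by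
      intro p hp hdvd
      haveI : Fact p.Prime := ⟨hp⟩
      set M : Matrix (Fin ℓ) (Fin k) (ZMod p) := E.map Int.cast with hM
      have hMnotinj : ¬ Function.Injective M.mulVec := by
        intro hMinj
        obtain ⟨ρ, hρ, hdet⟩ := exists_nonzero_minor_aux M hMinj
        apply hdet
        have h1 : (p : ℤ) ∣ f ρ :=
          dvd_trans hdvd (Finset.gcd_dvd (by simp [hS, hρ]))
        have h2 : ((E.submatrix ρ id).det : ZMod p) = (M.submatrix ρ id).det := by
          have h3 : M.submatrix ρ id = (Int.castRingHom (ZMod p)).mapMatrix (E.submatrix ρ id) := rfl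
          rw [h3, ← RingHom.map_det]
          rfl
        rw [← h2, ZMod.intCast_zmod_eq_zero_iff_dvd]
        exact h1
      have hkerne : LinearMap.ker M.mulVecLin ≠ ⊥ := by
        intro h
        exact hMnotinj (by rw [← Matrix.coe_mulVecLin]; exact LinearMap.ker_eq_bot.mp h)
      obtain ⟨v, hvmem, hv0⟩ := Submodule.ne_bot_iff _ |>.mp hkerne
      have hv : M.mulVec v = 0 := hvmem
      set X : Fin k → ℤ := fun j => ((v j).val : ℤ) with hX
      have hcast : ∀ j, ((X j : ℤ) : ZMod p) = v j := by
        intro j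
        simp [hX]
      have hdvdE : ∀ i, (p : ℤ) ∣ E.mulVec X i := by
        intro i
        rw [← ZMod.intCast_zmod_eq_zero_iff_dvd]
        have h4 : ((E.mulVec X i : ℤ) : ZMod p) = M.mulVec v i := by
          simp only [Matrix.mulVec, dotProduct, Int.cast_sum, Int.cast_mul]
          exact Finset.sum_congr rfl fun j _ => by rw [hcast j]; rfl
        rw [h4, hv]
        rfl
      simp only [dvd_def] at hdvdE
      choose Y hY using hdvdE
      have hEX : E.mulVec X = (p : ℤ) • Y := by
        funext i
        rw [Pi.smul_apply, smul_eq_mul, hY i]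
      obtain ⟨X', hX'⟩ := tf Y p hp.pos ⟨X, hEX⟩
      have hXpX' : X = (p : ℤ) • X' := by
        apply inj
        rw [Matrix.mulVec_smul, hX', hEX]
      apply hv0
      funext j
      have h5 := hcast j
      rw [congrFun hXpX' j] at h5
      rw [← h5]
      simp [ZMod.natCast_self]
    have h1 : (S.gcd f).natAbs = 1 := by
      rw [Nat.eq_one_iff_not_exists_prime_dvd]
      intro p hp hdvd
      refine key p hp ?_
      exact Int.dvd_natAbs.mp (Int.natCast_dvd_natCast.mpr hdvd)
    have h2 : 0 ≤ S.gcd f := by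
      have h3 := Finset.normalize_gcd (s := S) (f := f)
      rw [← h3, ← Int.abs_eq_normalize]
      exact abs_nonneg _
    omega
  tfae_have 3 → 1 := by
    intro hgcd
    set S : Finset (Fin k ↪ Fin ℓ) :=
      Finset.univ.filter (fun ρ : Fin k ↪ Fin ℓ => StrictMono ρ) with hS
    obtain ⟨c, hc⟩ := exists_gcd_eq_sum_aux S (fun ρ => (E.submatrix ρ id).det)
    rw [hgcd] at hc
    have hP : ∀ ρ : Fin k ↪ Fin ℓ,
        (Matrix.of (fun i j => if ρ i = j then (1 : ℤ) else 0)) * E = E.submatrix ρ id := by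
      intro ρ
      ext i j
      simp [Matrix.mul_apply, Matrix.submatrix_apply, ite_mul]
    refine ⟨∑ ρ ∈ S, c ρ • ((E.submatrix ρ id).adjugate *
      Matrix.of (fun i j => if ρ i = j then (1 : ℤ) else 0)), ?_⟩
    rw [Matrix.sum_mul]
    calc ∑ ρ ∈ S, (c ρ • ((E.submatrix ρ id).adjugate *
          Matrix.of (fun i j => if ρ i = j then (1 : ℤ) else 0))) * E
        = ∑ ρ ∈ S, (c ρ * (E.submatrix ρ id).det) • (1 : Matrix (Fin k) (Fin k) ℤ) := by
          refine Finset.sum_congr rfl fun ρ _ => ?_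
          rw [Matrix.smul_mul, Matrix.mul_assoc, hP ρ, Matrix.adjugate_mul, smul_smul]
      _ = 1 := by rw [← Finset.sum_smul, hc, one_smul]
  tfae_finish
end

section
/- Let k, ℓ ∈ ℕ with k ≤ ℓ and let E be an ℓ × k integer matrix such that the map h : ℤ^k → ℤ^ℓ, h(X) = E·X, is injective and the quotient group ℤ^ℓ/range(h) is torsion free. Let d be the greatest common divisor of the determinants of all full square submatrices of E. Then for every r with 1 ≤ r ≤ k and every r × r submatrix F of E (obtained by choosing r rows via an injection {1,…,r} → {1,…,ℓ} and r columns via an injection {1,…,r} → {1,…,k}), d divides det(F). -/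
open Matrix

/-- Over a field, if `mulVec` of an `ℓ × k` matrix is injective, then some
strictly monotone choice of `k` rows gives a square submatrix with nonzero
determinant. -/
lemma key_field {K : Type*} [Field K] {ℓ k : ℕ} (M : Matrix (Fin ℓ) (Fin k) K)
    (hinj : Function.Injective M.mulVec) :
    ∃ ρ : Fin k ↪ Fin ℓ, StrictMono ρ ∧ (M.submatrix ρ id).det ≠ 0 := by
  classical
  -- the rank of M is k
  have hrank : M.rank = k := by
    have h1 : Function.Injective M.mulVecLin := hinj
    rw [Matrix.rank, LinearMap.finrank_range_of_inj h1]
    simp [Module.finrank_pi]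
  have hspan : Submodule.span K (Set.range M) = ⊤ := by
    apply Submodule.eq_top_of_finrank_eq
    rw [show Set.range M = Set.range M.row from rfl, ← Matrix.rank_eq_finrank_span_row, hrank]
    simp [Module.finrank_pi]
  obtain ⟨b, hbsub, hbspan, hli⟩ := exists_linearIndependent K (Set.range M)
  rw [hspan] at hbspan
  have hbfin : b.Finite := (Set.finite_range M).subset hbsub
  haveI : Fintype b := hbfin.fintype
  -- b is a basis, so it has cardinality k
  let B : Module.Basis b K (Fin k → K) :=
    Module.Basis.mk hli (by rw [Subtype.range_coe]; exact hbspan.symm.le)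
  have hcard : Fintype.card b = k := by
    have := Module.finrank_eq_card_basis B
    simp [Module.finrank_pi] at this
    rw [← Nat.card_eq_fintype_card, Nat.card_coe_set_eq]
    omega
  -- choose preimage rows
  have hex : ∀ v : b, ∃ i : Fin ℓ, M i = (v : Fin k → K) := fun v => hbsub v.2
  choose f hf using hex
  have hfinj : Function.Injective f := by
    intro v w hvw
    have : (v : Fin k → K) = w := by rw [← hf v, ← hf w, hvw]
    exact Subtype.ext this
  let e : Fin k ≃ b := (Fintype.equivFinOfCardEq hcard).symm
  let ρ' : Fin k ↪ Fin ℓ := ⟨fun j => f (e j), hfinj.comp e.injective⟩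
  -- the submatrix on rows ρ' has linearly independent rows, hence det ≠ 0
  have hrows : (fun j => (M.submatrix ρ' id) j) = fun j => ((e j : Fin k → K)) := by
    funext j
    have : M (f (e j)) = (e j : Fin k → K) := hf (e j)
    exact this
  have hliN : LinearIndependent K (fun j => (M.submatrix ρ' id) j) := by
    rw [hrows]
    exact hli.comp e e.injective
  have hdet' : (M.submatrix ρ' id).det ≠ 0 := by
    have : IsUnit (M.submatrix ρ' id) := Matrix.linearIndependent_rows_iff_isUnit.mp hliN
    have := (Matrix.isUnit_iff_isUnit_det _).mp this
    exact this.ne_zero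
  -- now sort ρ'
  let s : Finset (Fin ℓ) := Finset.univ.map ρ'
  have hs : s.card = k := by simp [s]
  let ρ₀ : Fin k ↪ Fin ℓ := (s.orderEmbOfFin hs).toEmbedding
  have hmono : StrictMono ρ₀ := (s.orderEmbOfFin hs).strictMono
  -- find the permutation relating ρ' and ρ₀
  have hmem : ∀ j, ρ' j ∈ s := fun j => Finset.mem_map_of_mem ρ' (Finset.mem_univ j)
  have hexg : ∀ j, ∃ j', s.orderEmbOfFin hs j' = ρ' j := by
    intro j
    have : (ρ' j : Fin ℓ) ∈ Set.range (s.orderEmbOfFin hs) := by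
      rw [Finset.range_orderEmbOfFin]
      exact_mod_cast hmem j
    exact this
  choose g hg using hexg
  have hginj : Function.Injective g := by
    intro a b hab
    apply ρ'.injective
    rw [← hg a, ← hg b, hab]
  let π : Equiv.Perm (Fin k) := Equiv.ofBijective g (Finite.injective_iff_bijective.mp hginj)
  have hsub : M.submatrix ρ' id = (M.submatrix ρ₀ id).submatrix π id := by
    ext j i
    simp only [Matrix.submatrix_apply, id_eq]
    rw [← hg j]
    rfl
  refine ⟨ρ₀, hmono, fun h0 => hdet' ?_⟩
  rw [hsub, Matrix.det_permute, h0, mul_zero]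

/-- Let `E` be an `ℓ × k` integer matrix (`k ≤ ℓ`) such that
`X ↦ E.mulVec X` is injective and `ℤ^ℓ / range(E.mulVec)` is torsion free.
If `d` is the gcd of the determinants of all full square submatrices of `E`, then
`d` divides the determinant of every `r × r` submatrix of `E` for `1 ≤ r ≤ k`. -/
theorem stmt6 {k ℓ : ℕ} (hkl : k ≤ ℓ) (E : Matrix (Fin ℓ) (Fin k) ℤ)
    (hinj : Function.Injective (E.mulVec : (Fin k → ℤ) → (Fin ℓ → ℤ)))
    (htf : ∀ (Y : Fin ℓ → ℤ) (n : ℕ), 0 < n →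
        (n : ℤ) • Y ∈ Set.range E.mulVec → Y ∈ Set.range E.mulVec)
    (d : ℤ)
    (hd : d = Finset.gcd
        (Finset.univ.filter (fun ρ : Fin k ↪ Fin ℓ => StrictMono ρ))
        (fun ρ => (E.submatrix ρ id).det)) :
    ∀ (r : ℕ), 1 ≤ r → r ≤ k → ∀ (ρ : Fin r ↪ Fin ℓ) (σ : Fin r ↪ Fin k),
      d ∣ (E.submatrix ρ σ).det := by
  classical
  -- d divides every strictly monotone full minor
  have hdvd_minor : ∀ ρ : Fin k ↪ Fin ℓ, StrictMono ρ → d ∣ (E.submatrix ρ id).det := by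
    intro ρ hρ
    rw [hd]
    exact Finset.gcd_dvd (by simp [hρ])
  -- no prime divides d
  have hnoprime : ∀ p : ℕ, p.Prime → ¬ ((p : ℤ) ∣ d) := by
    intro p hp hpd
    haveI : Fact p.Prime := ⟨hp⟩
    haveI : NeZero p := ⟨hp.ne_zero⟩
    -- all strictly monotone full minors of E vanish mod p
    set M : Matrix (Fin ℓ) (Fin k) (ZMod p) := E.map (Int.cast : ℤ → ZMod p) with hM
    have hminor0 : ∀ ρ : Fin k ↪ Fin ℓ, StrictMono ρ → (M.submatrix ρ id).det = 0 := by
      intro ρ hρ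
      have h1 : (p : ℤ) ∣ (E.submatrix ρ id).det := hpd.trans (hdvd_minor ρ hρ)
      have h2 : (M.submatrix ρ id) = (E.submatrix ρ id).map (Int.cast : ℤ → ZMod p) := by
        ext i j; simp [hM]
      have h3 : ((E.submatrix ρ id).map (Int.cast : ℤ → ZMod p)).det
          = (((E.submatrix ρ id).det : ℤ) : ZMod p) := by
        rw [show (Int.cast : ℤ → ZMod p) = ⇑(Int.castRingHom (ZMod p)) from rfl,
          ← RingHom.mapMatrix_apply, ← RingHom.map_det]
      rw [h2, h3]
      exact (ZMod.intCast_zmod_eq_zero_iff_dvd _ p).mpr h1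
    -- hence mulVec over ZMod p is not injective
    have hMnotinj : ¬ Function.Injective M.mulVec := by
      intro hMinj
      obtain ⟨ρ, hρ, hρdet⟩ := key_field M hMinj
      exact hρdet (hminor0 ρ hρ)
    -- get a nonzero kernel vector
    have : ∃ z : Fin k → ZMod p, z ≠ 0 ∧ M.mulVec z = 0 := by
      rw [Function.not_injective_iff] at hMnotinj
      obtain ⟨x, y, hxy, hne⟩ := hMnotinj
      refine ⟨x - y, sub_ne_zero_of_ne hne, ?_⟩
      rw [Matrix.mulVec_sub, hxy, sub_self]
    obtain ⟨z, hz0, hzker⟩ := this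
    -- lift z to an integer vector
    set X : Fin k → ℤ := fun j => ((z j).val : ℤ) with hX
    have hcast : ∀ i, ((E.mulVec X i : ℤ) : ZMod p) = M.mulVec z i := by
      intro i
      simp only [Matrix.mulVec, dotProduct, hX, hM, Matrix.map_apply]
      push_cast
      refine Finset.sum_congr rfl fun j _ => ?_
      congr 1
      exact ZMod.natCast_rightInverse (z j)
    have hpdvd : ∀ i, (p : ℤ) ∣ E.mulVec X i := by
      intro i
      rw [← ZMod.intCast_zmod_eq_zero_iff_dvd, hcast i, hzker]
      rfl
    -- use torsion-freeness
    set Y : Fin ℓ → ℤ := fun i => E.mulVec X i / p with hY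
    have hpY : (p : ℤ) • Y = E.mulVec X := by
      funext i
      simp only [Pi.smul_apply, smul_eq_mul, hY]
      exact Int.mul_ediv_cancel' (hpdvd i)
    obtain ⟨Z, hZ⟩ := htf Y p hp.pos ⟨X, hpY.symm⟩
    have hXZ : X = (p : ℤ) • Z := by
      apply hinj
      rw [Matrix.mulVec_smul, hZ, hpY]
    have hz0' : z = 0 := by
      funext j
      have h1 : (p : ℤ) ∣ X j := by rw [hXZ]; exact ⟨Z j, rfl⟩
      have h1' : (p : ℤ) ∣ ((z j).val : ℤ) := by simpa [hX] using h1
      have h2 : p ∣ (z j).val := by exact_mod_cast h1'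
      have h3 : (z j).val = 0 := Nat.eq_zero_of_dvd_of_lt h2 (ZMod.val_lt (z j))
      exact (ZMod.val_eq_zero _).mp h3
    exact hz0 hz0'
  -- hence d is a unit
  have hdunit : IsUnit d := by
    rw [Int.isUnit_iff_natAbs_eq]
    by_contra hne
    rcases Nat.eq_zero_or_pos d.natAbs with h0 | hpos
    · have : d = 0 := Int.natAbs_eq_zero.mp h0
      exact hnoprime 2 Nat.prime_two (by simp [this])
    · obtain ⟨p, hp, hpdvd⟩ := Nat.exists_prime_and_dvd hne
      exact hnoprime p hp ((Int.natCast_dvd_natCast.mpr hpdvd).trans (Int.natAbs_dvd.mpr dvd_rfl))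
  intro r _ _ ρ σ
  exact hdunit.dvd
end

section
/- Let k, ℓ ∈ ℕ with ℓ ≤ k and let E be an ℓ × k integer matrix. Then there exists a k × ℓ integer matrix R with E·R = I_ℓ if and only if the greatest common divisor of the determinants of all full square submatrices of E equals 1. -/
open Matrix Finset

variable {R : Type*} [CommRing R] {ℓ k : ℕ}

namespace Stmt8Aux

noncomputable def monoOf (f : Fin ℓ ↪ Fin k) : Fin ℓ ↪ Fin k :=
  ((Finset.univ.map f).orderEmbOfFin (by simp)).toEmbedding

lemma monoOf_strictMono (f : Fin ℓ ↪ Fin k) : StrictMono (monoOf f) :=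
  ((Finset.univ.map f).orderEmbOfFin (by simp)).strictMono

noncomputable def permOf (f : Fin ℓ ↪ Fin k) : Equiv.Perm (Fin ℓ) :=
  (Equiv.ofInjective f f.injective).trans
    ((Equiv.subtypeEquivRight (fun x => by
        simp [Set.mem_range, Finset.mem_map])).trans
      ((Finset.univ.map f).orderIsoOfFin (by simp)).symm.toEquiv)

lemma monoOf_permOf (f : Fin ℓ ↪ Fin k) (i : Fin ℓ) : monoOf f (permOf f i) = f i := by
  simp only [monoOf, permOf, Equiv.trans_apply, OrderIso.toEquiv_symm,
    RelEmbedding.coe_toEmbedding]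
  rw [← Finset.coe_orderIsoOfFin_apply]
  simp

/-- uniqueness of the decomposition -/
lemma monoOf_comp (σ : Fin ℓ ↪ Fin k) (hσ : StrictMono σ) (τ : Equiv.Perm (Fin ℓ)) :
    monoOf (τ.toEmbedding.trans σ) = σ := by
  have h : ⇑σ = (Finset.univ.map (τ.toEmbedding.trans σ)).orderEmbOfFin (by simp) :=
    Finset.orderEmbOfFin_unique _ (fun x => by
      simp only [Finset.mem_map, Finset.mem_univ, true_and]
      exact ⟨τ.symm x, by simp⟩) hσ
  exact Function.Embedding.ext fun i => (congrFun h.symm i)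

lemma permOf_comp (σ : Fin ℓ ↪ Fin k) (hσ : StrictMono σ) (τ : Equiv.Perm (Fin ℓ)) :
    permOf (τ.toEmbedding.trans σ) = τ := by
  set f := τ.toEmbedding.trans σ with hf
  refine Equiv.ext fun i => ?_
  have h1 : monoOf f (permOf f i) = f i := monoOf_permOf f i
  rw [monoOf_comp σ hσ τ] at h1
  have : f i = σ (τ i) := rfl
  exact σ.injective (h1.trans this)

end Stmt8Aux

namespace Stmt8Aux

lemma det_mul_expand (A : Matrix (Fin ℓ) (Fin k) R) (B : Matrix (Fin k) (Fin ℓ) R) :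
    (A * B).det = ∑ f : Fin ℓ → Fin k, (∏ i, A i (f i)) * (B.submatrix f id).det := by
  have h : (A * B) = Matrix.of (fun i => ∑ m : Fin k, A i m • B m) := by
    ext i j
    simp [Matrix.mul_apply, Finset.sum_apply]
  rw [h]
  have := (Matrix.detRowAlternating (R := R) (n := Fin ℓ)).toMultilinearMap.map_sum
    (g := fun (i : Fin ℓ) (m : Fin k) => A i m • B m)
  show (Matrix.detRowAlternating (R := R) (n := Fin ℓ)).toMultilinearMap
      (fun i => ∑ m : Fin k, A i m • B m) = _
  rw [this]
  refine Finset.sum_congr rfl fun f _ => ?_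
  rw [show (fun i => A i (f i) • B (f i)) = (fun i => A i (f i) • (fun i' => B (f i')) i) from rfl,
    MultilinearMap.map_smul_univ]
  simp only [smul_eq_mul]
  rfl

end Stmt8Aux

namespace Stmt8Aux

lemma inner_sum (A : Matrix (Fin ℓ) (Fin k) R) (B : Matrix (Fin k) (Fin ℓ) R)
    (σ : Fin ℓ ↪ Fin k) :
    ∑ τ : Equiv.Perm (Fin ℓ), (∏ i, A i (σ (τ i))) * (B.submatrix (fun i => σ (τ i)) id).det
      = (A.submatrix id σ).det * (B.submatrix σ id).det := by
  have h1 : ∀ τ : Equiv.Perm (Fin ℓ),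
      (B.submatrix (fun i => σ (τ i)) id).det
        = (Equiv.Perm.sign τ : ℤ) * (B.submatrix σ id).det := by
    intro τ
    have : B.submatrix (fun i => σ (τ i)) id = (B.submatrix σ id).submatrix τ id := rfl
    rw [this, Matrix.det_permute]
  have h2 : (A.submatrix id σ).det
      = ∑ τ : Equiv.Perm (Fin ℓ), (Equiv.Perm.sign τ : ℤ) * ∏ i, A i (σ (τ i)) := by
    rw [← Matrix.det_transpose, Matrix.det_apply']
    refine Finset.sum_congr rfl fun τ _ => ?_
    congr 1
  rw [h2, Finset.sum_mul]
  refine Finset.sum_congr rfl fun τ _ => ?_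
  rw [h1 τ]
  ring

lemma cauchy_binet (A : Matrix (Fin ℓ) (Fin k) R) (B : Matrix (Fin k) (Fin ℓ) R) :
    (A * B).det = ∑ σ ∈ Finset.univ.filter (fun σ : Fin ℓ ↪ Fin k => StrictMono ⇑σ),
      (A.submatrix id σ).det * (B.submatrix σ id).det := by
  classical
  rw [det_mul_expand]
  rw [← Finset.sum_filter_add_sum_filter_not Finset.univ
    (fun f : Fin ℓ → Fin k => Function.Injective f)]
  have h0 : ∑ f ∈ Finset.univ.filter (fun f : Fin ℓ → Fin k => ¬ Function.Injective f),
      (∏ i, A i (f i)) * (B.submatrix f id).det = 0 := by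
    refine Finset.sum_eq_zero fun f hf => ?_
    have hinj : ¬ Function.Injective f := (Finset.mem_filter.1 hf).2
    rw [Function.Injective] at hinj
    push_neg at hinj
    obtain ⟨i, j, hij, hne⟩ := hinj
    rw [Matrix.det_zero_of_row_eq hne (by
      ext x
      simp [Matrix.submatrix_apply, hij]), mul_zero]
  rw [h0, add_zero]
  have key : ∑ f ∈ Finset.univ.filter (fun f : Fin ℓ → Fin k => Function.Injective f),
        (∏ i, A i (f i)) * (B.submatrix f id).det
      = ∑ p ∈ (Finset.univ.filter (fun σ : Fin ℓ ↪ Fin k => StrictMono ⇑σ)) ×ˢ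
          (Finset.univ : Finset (Equiv.Perm (Fin ℓ))),
        (∏ i, A i (p.1 (p.2 i))) * (B.submatrix (fun i => p.1 (p.2 i)) id).det := by
    refine (Finset.sum_bij (fun p _ => fun i => p.1 (p.2 i)) ?_ ?_ ?_ ?_).symm
    · rintro ⟨σ, τ⟩ hp
      simp only [Finset.mem_filter, Finset.mem_univ, true_and]
      exact (σ.injective).comp τ.injective
    · rintro ⟨σ₁, τ₁⟩ hp₁ ⟨σ₂, τ₂⟩ hp₂ heq
      have hs₁ : StrictMono ⇑σ₁ := by
        simpa using (Finset.mem_filter.1 (Finset.mem_product.1 hp₁).1).2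
      have hs₂ : StrictMono ⇑σ₂ := by
        simpa using (Finset.mem_filter.1 (Finset.mem_product.1 hp₂).1).2
      have he : τ₁.toEmbedding.trans σ₁ = τ₂.toEmbedding.trans σ₂ :=
        Function.Embedding.ext fun i => congrFun heq i
      have h1 : σ₁ = σ₂ := by
        rw [← monoOf_comp σ₁ hs₁ τ₁, ← monoOf_comp σ₂ hs₂ τ₂, he]
      have h2 : τ₁ = τ₂ := by
        rw [← permOf_comp σ₁ hs₁ τ₁, ← permOf_comp σ₂ hs₂ τ₂, he]
      exact Prod.ext h1 h2
    · intro f hf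
      have hinj : Function.Injective f := (Finset.mem_filter.1 hf).2
      refine ⟨(monoOf ⟨f, hinj⟩, permOf ⟨f, hinj⟩), ?_, ?_⟩
      · simp only [Finset.mem_product, Finset.mem_filter, Finset.mem_univ, true_and]
        exact ⟨monoOf_strictMono _, trivial⟩
      · funext i
        exact monoOf_permOf ⟨f, hinj⟩ i
    · intro p hp
      rfl
  rw [key, Finset.sum_product]
  exact Finset.sum_congr rfl fun σ _ => inner_sum A B σ

end Stmt8Aux

namespace Stmt8Aux

lemma finset_gcd_bezout {α : Type*} [DecidableEq α] (s : Finset α) (f : α → ℤ) :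
    ∃ c : α → ℤ, ∑ x ∈ s, c x * f x = s.gcd f := by
  induction s using Finset.induction_on with
  | empty => exact ⟨fun _ => 0, by simp⟩
  | insert _ _ ha ih =>
    rename_i a s
    obtain ⟨c, hc⟩ := ih
    refine ⟨fun x => if x = a then Int.gcdA (f a) (s.gcd f)
      else Int.gcdB (f a) (s.gcd f) * c x, ?_⟩
    rw [Finset.sum_insert ha, Finset.gcd_insert]
    have hrest : ∑ x ∈ s, (if x = a then Int.gcdA (f a) (s.gcd f)
        else Int.gcdB (f a) (s.gcd f) * c x) * f x
        = Int.gcdB (f a) (s.gcd f) * ∑ x ∈ s, c x * f x := by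
      rw [Finset.mul_sum]
      refine Finset.sum_congr rfl fun x hx => ?_
      rw [if_neg (by rintro rfl; exact ha hx), mul_assoc]
    rw [hrest, hc]
    beta_reduce
    rw [if_pos rfl, ← Int.coe_gcd, Int.gcd_eq_gcd_ab]
    ring

end Stmt8Aux

open Stmt8Aux

/-- An `ℓ × k` integer matrix `E` with `ℓ ≤ k` has a right inverse integer
matrix (`E * R = I_ℓ`) iff the gcd of the determinants of all full square submatrices
of `E` (obtained by selecting `ℓ` of the `k` columns) equals `1`. -/
theorem stmt8 {k ℓ : ℕ} (hlk : ℓ ≤ k) (E : Matrix (Fin ℓ) (Fin k) ℤ) :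
    (∃ R : Matrix (Fin k) (Fin ℓ) ℤ, E * R = (1 : Matrix (Fin ℓ) (Fin ℓ) ℤ)) ↔
      Finset.gcd (Finset.univ.filter (fun σ : Fin ℓ ↪ Fin k => StrictMono σ))
        (fun σ => (E.submatrix id σ).det) = 1 := by
  classical
  set S := Finset.univ.filter (fun σ : Fin ℓ ↪ Fin k => StrictMono σ) with hS
  constructor
  · rintro ⟨R, hR⟩
    have h1 : (1 : ℤ) = ∑ σ ∈ S, (E.submatrix id σ).det * (R.submatrix σ id).det := by
      have := cauchy_binet E R
      rw [hR] at this
      simpa using this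
    have hdvd : S.gcd (fun σ => (E.submatrix id σ).det) ∣ 1 := by
      rw [h1]
      exact Finset.dvd_sum fun σ hσ => (Finset.gcd_dvd hσ).mul_right _
    have hnonneg : 0 ≤ S.gcd (fun σ => (E.submatrix id σ).det) := by
      rw [← Finset.normalize_gcd, ← Int.abs_eq_normalize]
      exact abs_nonneg _
    rcases Int.isUnit_iff.1 (isUnit_of_dvd_one hdvd) with h | h
    · exact h
    · omega
  · intro hgcd
    obtain ⟨c, hc⟩ := finset_gcd_bezout S (fun σ => (E.submatrix id σ).det)
    rw [hgcd] at hc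
    refine ⟨∑ σ ∈ S, c σ • (((1 : Matrix (Fin k) (Fin k) ℤ).submatrix (Equiv.refl (Fin k)) ⇑σ) *
      (E.submatrix id ⇑σ).adjugate), ?_⟩
    rw [Matrix.mul_sum]
    have hterm : ∀ σ : Fin ℓ ↪ Fin k,
        E * (c σ • (((1 : Matrix (Fin k) (Fin k) ℤ).submatrix (Equiv.refl (Fin k)) ⇑σ) *
          (E.submatrix id ⇑σ).adjugate))
        = (c σ * (E.submatrix id ⇑σ).det) • (1 : Matrix (Fin ℓ) (Fin ℓ) ℤ) := by
      intro σ
      rw [Matrix.mul_smul, ← Matrix.mul_assoc, Matrix.mul_submatrix_one]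
      have : (E.submatrix id ((Equiv.refl (Fin k)).symm ∘ ⇑σ)) = E.submatrix id ⇑σ := rfl
      rw [this, Matrix.mul_adjugate, smul_smul]
    calc ∑ σ ∈ S, E * (c σ • _) = ∑ σ ∈ S, (c σ * (E.submatrix id ⇑σ).det) • (1 : Matrix (Fin ℓ) (Fin ℓ) ℤ) :=
          Finset.sum_congr rfl fun σ _ => hterm σ
      _ = (∑ σ ∈ S, c σ * (E.submatrix id ⇑σ).det) • (1 : Matrix (Fin ℓ) (Fin ℓ) ℤ) := by
          rw [Finset.sum_smul]
      _ = 1 := by rw [hc, one_smul]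
end
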